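/- Discrete fundamental-theorem identity (equation (3.13) in the proof of Lemma 3.3): for every α ∈ (0,1), every partition 0 = t_0 < ⋯ < t_N = T, every real sequence (w^j)_{j=0}^{N}, and every 1 ≤ n ≤ N, one has Σ_{j=1}^{n} P^{n,j}_α · D^α_{t_j} w^j = w^n − w^0, where D^α_{t_j} w^j = Σ_{k=1}^{j} K^{j,k}_{1−α}(w^k − w^{k−1}). -/

import Mathlib

open Finset

/-- The kernel `k_β(s) = s^(β-1)/Γ(β)`. -/
noncomputable def kker (β s : ℝ) : ℝ := s ^ (β - 1) / Real.Gamma β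

/-- The discrete L1 kernels `K^{n,j}_{1-α}`. -/
noncomputable def Kd (α : ℝ) (t : ℕ → ℝ) (n j : ℕ) : ℝ :=
  (kker (2 - α) (t n - t (j - 1)) - kker (2 - α) (t n - t j)) / (t j - t (j - 1))

/-- The complementary discrete kernels `P^{n,i}_α`, defined by downward recursion. -/
noncomputable def Pd (α : ℝ) (t : ℕ → ℝ) (n i : ℕ) : ℝ :=
  if i = n then 1 / Kd α t n n
  else (1 / Kd α t i i) *
    ∑ j ∈ (Finset.Ioc i n).attach,
      Pd α t n j.1 * (Kd α t j.1 (i + 1) - Kd α t j.1 i)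
termination_by n - i
decreasing_by
  have h := Finset.mem_Ioc.mp j.2
  omega

/-- The discrete (L1) Caputo fractional derivative
`D^α_{t_n} w^n = Σ_{j=1}^{n} K^{n,j}_{1-α} (w^j - w^{j-1})`. -/
noncomputable def Dcap (α : ℝ) (t : ℕ → ℝ) (w : ℕ → ℝ) (n : ℕ) : ℝ :=
  ∑ j ∈ Finset.Icc 1 n, Kd α t n j * (w j - w (j - 1))

/-- The diagonal kernel `K^{k,k}_{1-α}` is positive. -/
lemma Kd_diag_pos (α : ℝ) (N : ℕ) (t : ℕ → ℝ)
    (hα0 : 0 < α) (hα1 : α < 1)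
    (hmono : ∀ j, j < N → t j < t (j + 1))
    (k : ℕ) (hk1 : 1 ≤ k) (hkN : k ≤ N) : 0 < Kd α t k k := by
  have hlt : t (k - 1) < t k := by
    have := hmono (k - 1) (by omega)
    rwa [Nat.sub_add_cancel hk1] at this
  have hΓ : 0 < Real.Gamma (2 - α) := Real.Gamma_pos_of_pos (by linarith)
  unfold Kd kker
  rw [sub_self, Real.zero_rpow (by norm_num; linarith), zero_div, sub_zero]
  exact div_pos (div_pos (Real.rpow_pos_of_pos (by linarith) _) hΓ) (by linarith)

/-- Column sums of `P · K` equal one. -/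
lemma colsum (α : ℝ) (N : ℕ) (t : ℕ → ℝ)
    (hα0 : 0 < α) (hα1 : α < 1)
    (hmono : ∀ j, j < N → t j < t (j + 1))
    (n : ℕ) (hnN : n ≤ N) :
    ∀ k, 1 ≤ k → k ≤ n → ∑ j ∈ Finset.Icc k n, Pd α t n j * Kd α t j k = 1 := by
  have key : ∀ d k, 1 ≤ k → k ≤ n → n - k = d →
      ∑ j ∈ Finset.Icc k n, Pd α t n j * Kd α t j k = 1 := by
    intro d
    induction d with
    | zero =>
      intro k hk1 hkn hd
      have hk : k = n := by omega
      subst hk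
      rw [Finset.Icc_self, Finset.sum_singleton, Pd, if_pos rfl]
      exact one_div_mul_cancel (ne_of_gt (Kd_diag_pos α N t hα0 hα1 hmono k hk1 (by omega)))
    | succ d ih =>
      intro k hk1 hkn hd
      have hklt : k < n := by omega
      have hKne : (Kd α t k k) ≠ 0 :=
        ne_of_gt (Kd_diag_pos α N t hα0 hα1 hmono k hk1 (by omega))
      rw [Finset.Icc_eq_cons_Ioc (le_of_lt hklt), Finset.sum_cons]
      rw [Pd, if_neg (by omega)]
      rw [Finset.sum_attach (Finset.Ioc k n)
        (fun j => Pd α t n j * (Kd α t j (k + 1) - Kd α t j k))]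
      rw [mul_comm (1 / Kd α t k k), mul_assoc, one_div_mul_cancel hKne, mul_one]
      have expand : ∑ j ∈ Finset.Ioc k n, Pd α t n j * (Kd α t j (k + 1) - Kd α t j k)
          + ∑ j ∈ Finset.Ioc k n, Pd α t n j * Kd α t j k
          = ∑ j ∈ Finset.Ioc k n, Pd α t n j * Kd α t j (k + 1) := by
        rw [← Finset.sum_add_distrib]
        apply Finset.sum_congr rfl
        intro j _
        ring
      rw [expand, ← Finset.Icc_add_one_left_eq_Ioc]
      exact ih (k + 1) (by omega) (by omega) (by omega)
  intro k hk1 hkn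
  exact key (n - k) k hk1 hkn rfl

/-- Telescoping sum. -/
lemma telescope (w : ℕ → ℝ) : ∀ n : ℕ, ∑ k ∈ Finset.Icc 1 n, (w k - w (k - 1)) = w n - w 0 := by
  intro n
  induction n with
  | zero => simp
  | succ n ih =>
    rw [Finset.sum_Icc_succ_top (by omega : 1 ≤ n + 1), ih]
    simp

/-- Discrete fundamental-theorem identity (equation (3.13)):
`Σ_{j=1}^{n} P^{n,j}_α D^α_{t_j} w^j = w^n - w^0` for every `1 ≤ n ≤ N`. -/
theorem discrete_fundamental_identity
    (α T : ℝ) (N : ℕ) (t : ℕ → ℝ)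
    (hα0 : 0 < α) (hα1 : α < 1) (hT : 0 < T)
    (ht0 : t 0 = 0) (htN : t N = T)
    (hmono : ∀ j, j < N → t j < t (j + 1))
    (w : ℕ → ℝ) :
    ∀ n, 1 ≤ n → n ≤ N →
      ∑ j ∈ Finset.Icc 1 n, Pd α t n j * Dcap α t w j = w n - w 0 := by
  intro n hn1 hnN
  unfold Dcap
  simp_rw [Finset.mul_sum]
  rw [Finset.sum_comm' (t' := Finset.Icc 1 n) (s' := fun k => Finset.Icc k n)
    (by intro j k; simp only [Finset.mem_Icc]; omega)]
  have inner : ∀ k ∈ Finset.Icc 1 n,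
      ∑ j ∈ Finset.Icc k n, Pd α t n j * (Kd α t j k * (w k - w (k - 1)))
        = w k - w (k - 1) := by
    intro k hk
    rw [Finset.mem_Icc] at hk
    calc ∑ j ∈ Finset.Icc k n, Pd α t n j * (Kd α t j k * (w k - w (k - 1)))
        = (∑ j ∈ Finset.Icc k n, Pd α t n j * Kd α t j k) * (w k - w (k - 1)) := by
          rw [Finset.sum_mul]; apply Finset.sum_congr rfl; intro j _; ring
      _ = w k - w (k - 1) := by
          rw [colsum α N t hα0 hα1 hmono n hnN k hk.1 hk.2, one_mul]
  rw [Finset.sum_congr rfl inner, telescope]
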